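/- Let p ≥ 1, γ ≥ 1, r > 0, let b_1, …, b_n ∈ ℤ^d be linearly independent, let t ∈ ℤ^d, let α > 0, let L = L(b_1, …, b_n), and let L' ⊂ ℝ^{d+1} be the lattice generated by (b_1, 0), …, (b_n, 0), (t, α). Suppose every v ∈ L satisfies ‖v − t‖_p > γ·r. Then every set of n+1 linearly independent vectors of L' contains at least one vector x with ‖x‖_p^p ≥ min(γ^p r^p + α^p, 2^p α^p). In particular λ_{n+1}^{(p)}(L')^p ≥ min(γ^p r^p + α^p, 2^p α^p). -/

import Mathlib

/-- The ℓ_p "norm" of a vector `x ∈ ℝ^d`: `(∑ i, |x i| ^ p) ^ (1/p)`. -/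
noncomputable def lpNorm (p : ℝ) {d : ℕ} (x : Fin d → ℝ) : ℝ :=
  (∑ i, |x i| ^ p) ^ (1 / p)

/-- Membership in the lattice generated by the vectors `b 0, …, b (n-1)`. -/
def inLattice {n d : ℕ} (b : Fin n → Fin d → ℝ) (v : Fin d → ℝ) : Prop :=
  ∃ z : Fin n → ℤ, v = ∑ i, (z i : ℝ) • b i

/-- The `k`-th successive minimum (in the ℓ_p norm) of the lattice generated by `b`. -/
noncomputable def succMin (p : ℝ) {n d : ℕ} (b : Fin n → Fin d → ℝ) (k : ℕ) : ℝ :=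
  sInf {ℓ : ℝ | ∃ v : Fin k → Fin d → ℝ,
    LinearIndependent ℝ v ∧ (∀ i, inLattice b (v i)) ∧ ∀ i, lpNorm p (v i) ≤ ℓ}

lemma lpNorm_nonneg' (p : ℝ) {d : ℕ} (x : Fin d → ℝ) : 0 ≤ lpNorm p x :=
  Real.rpow_nonneg (Finset.sum_nonneg fun _ _ => Real.rpow_nonneg (abs_nonneg _) p) _

lemma lpNorm_rpow' (p : ℝ) (hp : p ≠ 0) {d : ℕ} (x : Fin d → ℝ) :
    lpNorm p x ^ p = ∑ i, |x i| ^ p := by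
  rw [lpNorm, one_div, Real.rpow_inv_rpow
    (Finset.sum_nonneg fun _ _ => Real.rpow_nonneg (abs_nonneg _) p) hp]

/-- NO case: if every `v ∈ L = L(b_1,…,b_n)` satisfies `‖v−t‖_p > γ·r`,
then every set of `n+1` linearly independent vectors of the lattice `L'` generated by
`(b_1,0), …, (b_n,0), (t,α)` contains a vector `x` with
`‖x‖_p^p ≥ min(γ^p r^p + α^p, 2^p α^p)`.  In particular
`λ_{n+1}^{(p)}(L')^p ≥ min(γ^p r^p + α^p, 2^p α^p)`. -/
theorem stmt7 (p γ r : ℝ) (hp : 1 ≤ p) (hγ : 1 ≤ γ) (hr : 0 < r) (n d : ℕ)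
    (b : Fin n → Fin d → ℤ)
    (hb : LinearIndependent ℝ (fun i : Fin n => fun j : Fin d => (b i j : ℝ)))
    (t : Fin d → ℤ) (α : ℝ) (hα : 0 < α)
    (w : Fin (n + 1) → Fin (d + 1) → ℝ)
    (hw : w = Fin.snoc (fun i : Fin n => Fin.snoc (fun j => (b i j : ℝ)) (0 : ℝ))
      (Fin.snoc (fun j => (t j : ℝ)) α))
    (hfar : ∀ v : Fin d → ℝ,
      inLattice (fun i : Fin n => fun j : Fin d => (b i j : ℝ)) v →
      γ * r < lpNorm p (v - fun j => (t j : ℝ))) :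
    (∀ u : Fin (n + 1) → Fin (d + 1) → ℝ,
      LinearIndependent ℝ u → (∀ i, inLattice w (u i)) →
      ∃ i, min (γ ^ p * r ^ p + α ^ p) (2 ^ p * α ^ p) ≤ lpNorm p (u i) ^ p) ∧
    min (γ ^ p * r ^ p + α ^ p) (2 ^ p * α ^ p) ≤ succMin p w (n + 1) ^ p := by
  have hp0 : (0:ℝ) < p := lt_of_lt_of_le one_pos hp
  have hγr : (0:ℝ) < γ * r := mul_pos (lt_of_lt_of_le one_pos hγ) hr
  set m0 : ℝ := min (γ ^ p * r ^ p + α ^ p) (2 ^ p * α ^ p) with hm0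
  have hm0pos : 0 < m0 := by
    apply lt_min
    · have := Real.rpow_pos_of_pos hα p
      have h1 := Real.rpow_pos_of_pos (lt_of_lt_of_le one_pos hγ) p
      have h2 := Real.rpow_pos_of_pos hr p
      nlinarith
    · exact mul_pos (Real.rpow_pos_of_pos two_pos p) (Real.rpow_pos_of_pos hα p)
  subst hw
  set w : Fin (n + 1) → Fin (d + 1) → ℝ :=
    Fin.snoc (fun i : Fin n => Fin.snoc (fun j => (b i j : ℝ)) (0 : ℝ))
      (Fin.snoc (fun j => (t j : ℝ)) α) with hwdef
  -- the key claim
  have key : ∀ u : Fin (n + 1) → Fin (d + 1) → ℝ,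
      LinearIndependent ℝ u → (∀ i, inLattice w (u i)) →
      ∃ i, m0 ≤ lpNorm p (u i) ^ p := by
    intro u hLI hu
    -- find a vector whose last lattice coefficient is nonzero
    have step : ∃ i, ∃ z : Fin (n+1) → ℤ,
        u i = ∑ k, (z k : ℝ) • w k ∧ z (Fin.last n) ≠ 0 := by
      choose z hz using hu
      by_contra h
      push_neg at h
      have hmem : ∀ i, u i ∈ Submodule.span ℝ (Set.range (fun k : Fin n => w k.castSucc)) := by
        intro i
        rw [hz i, Fin.sum_univ_castSucc, h i (z i) (hz i), Int.cast_zero, zero_smul, add_zero]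
        exact Submodule.sum_mem _ fun k _ =>
          Submodule.smul_mem _ _ (Submodule.subset_span ⟨k, rfl⟩)
      have hcard := linearIndependent_le_span' u hLI _ (Set.range_subset_iff.mpr hmem)
      rw [Cardinal.mk_fintype, Fintype.card_fin, Nat.cast_le] at hcard
      have := Fintype.card_range_le (fun k : Fin n => w k.castSucc)
      rw [Fintype.card_fin] at this
      omega
    obtain ⟨i, z, hz, hzne⟩ := step
    refine ⟨i, ?_⟩
    set m : ℤ := z (Fin.last n) with hmdef
    have hlast : u i (Fin.last d) = (m : ℝ) * α := by
      rw [hz]; simp [Finset.sum_apply, Fin.sum_univ_castSucc, w]; exact Or.inl rfl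
    have hfront : ∀ j : Fin d, u i j.castSucc =
        (∑ k : Fin n, (z k.castSucc : ℝ) * b k j) + (m : ℝ) * t j := by
      intro j; rw [hz]; simp [Finset.sum_apply, Fin.sum_univ_castSucc, w]; exact Or.inl rfl
    have hsplit : lpNorm p (u i) ^ p =
        (∑ j : Fin d, |u i j.castSucc| ^ p) + |(m : ℝ) * α| ^ p := by
      rw [lpNorm_rpow' p hp0.ne', Fin.sum_univ_castSucc, hlast]
    rcases eq_or_lt_of_le (Int.one_le_abs hzne) with habs | habs
    · -- |m| = 1
      have hm1 : |(m : ℝ)| = 1 := by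
        rw [← Int.cast_abs, ← habs, Int.cast_one]
      have hm2 : (m : ℝ) * m = 1 := by
        have := abs_mul_abs_self (m : ℝ); rw [hm1] at this; linarith
      set v : Fin d → ℝ := ∑ k : Fin n, ((-m * z k.castSucc : ℤ) : ℝ) •
        (fun j : Fin d => (b k j : ℝ)) with hvdef
      have hvL : inLattice (fun i : Fin n => fun j : Fin d => (b i j : ℝ)) v :=
        ⟨fun k => -m * z k.castSucc, rfl⟩
      have hrel : ∀ j : Fin d, |u i j.castSucc| = |v j - t j| := by
        intro j
        have hvj : v j = -(m : ℝ) * ∑ k : Fin n, (z k.castSucc : ℝ) * b k j := by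
          simp [hvdef, Finset.sum_apply, Finset.mul_sum]
          ring_nf
        have : u i j.castSucc = -(m : ℝ) * (v j - t j) := by
          rw [hfront j, hvj]
          linear_combination (-(∑ k : Fin n, (z k.castSucc : ℝ) * b k j)) * hm2
        rw [this, abs_mul, abs_neg, hm1, one_mul]
      have hfarv := hfar v hvL
      have hsum : γ ^ p * r ^ p < ∑ j : Fin d, |u i j.castSucc| ^ p := by
        have h1 : (γ * r) ^ p < lpNorm p (v - fun j => (t j : ℝ)) ^ p :=
          Real.rpow_lt_rpow hγr.le hfarv hp0
        rw [lpNorm_rpow' p hp0.ne'] at h1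
        rw [← Real.mul_rpow (by linarith : (0:ℝ) ≤ γ) hr.le]
        calc (γ * r) ^ p < ∑ j : Fin d, |(v - fun j => (t j : ℝ)) j| ^ p := h1
          _ = ∑ j : Fin d, |u i j.castSucc| ^ p := by
              apply Finset.sum_congr rfl
              intro j _
              rw [Pi.sub_apply, ← hrel j]
      have hmα : |(m : ℝ) * α| ^ p = α ^ p := by
        rw [abs_mul, hm1, one_mul, abs_of_pos hα]
      rw [hsplit, hmα]
      exact le_trans (min_le_left _ _) (by linarith)
    · -- |m| ≥ 2
      have h2m : (2:ℝ) ≤ |(m : ℝ)| := by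
        rw [← Int.cast_abs]; exact_mod_cast habs
      have hmα : 2 ^ p * α ^ p ≤ |(m : ℝ) * α| ^ p := by
        rw [← Real.mul_rpow (by norm_num) hα.le, abs_mul, abs_of_pos hα]
        exact Real.rpow_le_rpow (by positivity) (by nlinarith) hp0.le
      have hnn : 0 ≤ ∑ j : Fin d, |u i j.castSucc| ^ p :=
        Finset.sum_nonneg fun _ _ => Real.rpow_nonneg (abs_nonneg _) p
      rw [hsplit]
      exact le_trans (min_le_right _ _) (by linarith)
  refine ⟨key, ?_⟩
  -- second part: bound the successive minimum
  have hwLI : LinearIndependent ℝ w := by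
    rw [Fintype.linearIndependent_iff] at hb ⊢
    intro c hc
    have hclast : c (Fin.last n) = 0 := by
      have := congrFun hc (Fin.last d)
      simp [Finset.sum_apply, Fin.sum_univ_castSucc, w] at this
      rcases this with h | h
      · exact h
      · exact absurd h hα.ne'
    have hcfront : ∀ k : Fin n, c k.castSucc = 0 := by
      apply hb
      funext j
      have := congrFun hc j.castSucc
      simp [Finset.sum_apply, Fin.sum_univ_castSucc, hclast, w] at this
      simpa [Finset.sum_apply] using this
    intro k
    induction k using Fin.lastCases with
    | last => exact hclast
    | cast k => exact hcfront k
  have hwmem : ∀ k, inLattice w (w k) := by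
    intro k
    refine ⟨fun j => if j = k then 1 else 0, ?_⟩
    simp [ite_smul, apply_ite]
  set S : Set ℝ := {ℓ : ℝ | ∃ v : Fin (n+1) → Fin (d+1) → ℝ,
    LinearIndependent ℝ v ∧ (∀ i, inLattice w (v i)) ∧ ∀ i, lpNorm p (v i) ≤ ℓ} with hS
  have hSne : S.Nonempty := by
    refine ⟨∑ k, lpNorm p (w k), w, hwLI, hwmem, fun i => ?_⟩
    exact Finset.single_le_sum (fun k _ => lpNorm_nonneg' p (w k)) (Finset.mem_univ i)
  have hlb : ∀ ℓ ∈ S, m0 ^ (1/p) ≤ ℓ := by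
    intro ℓ hℓ
    obtain ⟨v, hvLI, hvmem, hvbd⟩ := hℓ
    obtain ⟨i, hi⟩ := key v hvLI hvmem
    have hℓnn : 0 ≤ ℓ := le_trans (lpNorm_nonneg' p (v i)) (hvbd i)
    have h1 : m0 ≤ ℓ ^ p :=
      le_trans hi (Real.rpow_le_rpow (lpNorm_nonneg' p (v i)) (hvbd i) hp0.le)
    calc m0 ^ (1/p) ≤ (ℓ ^ p) ^ (1/p) :=
          Real.rpow_le_rpow hm0pos.le h1 (by positivity)
      _ = ℓ := by rw [one_div, Real.rpow_rpow_inv hℓnn hp0.ne']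
  have hsInf : m0 ^ (1/p) ≤ sInf S := le_csInf hSne hlb
  have : (m0 ^ (1/p)) ^ p ≤ sInf S ^ p :=
    Real.rpow_le_rpow (Real.rpow_nonneg hm0pos.le _) hsInf hp0.le
  rw [one_div, Real.rpow_inv_rpow hm0pos.le hp0.ne'] at this
  exact this
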